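/- Let a < b be real numbers and let κ, κ' : [a,b] → ℝ be continuous functions with κ'(t) ≥ κ(t) for all t ∈ [a,b]. Let u, v : [a,b] → ℝ be twice continuously differentiable functions satisfying u''(t) + κ(t)·u(t) = 0 and v''(t) + κ'(t)·v(t) = 0 on [a,b], with u(a) = v(a) = 0, u'(a) = v'(a) = 1. If v(t) > 0 for all t ∈ (a,b], then u(t) ≥ v(t) for all t ∈ [a,b]. (J. C. F. Sturm's comparison theorem.) -/

import Mathlib

open Set Filter Topology

/-- `u` is a (twice continuously differentiable) solution of `u'' + κ·u = 0` on the set `s`,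
with first and second derivative functions `u'` and `u''`. -/
def SturmSol (κ u u' u'' : ℝ → ℝ) (s : Set ℝ) : Prop :=
  (∀ t ∈ s, HasDerivWithinAt u (u' t) s t) ∧
  (∀ t ∈ s, HasDerivWithinAt u' (u'' t) s t) ∧
  ContinuousOn u'' s ∧
  (∀ t ∈ s, u'' t + κ t * u t = 0)

/-- Extension step for Sturm's comparison theorem. -/
lemma sturm_extend
    (a b : ℝ) (hab : a < b)
    (κ κ' : ℝ → ℝ)
    (hle : ∀ t ∈ Icc a b, κ t ≤ κ' t)
    (u u₁ u₂ v v₁ v₂ : ℝ → ℝ)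
    (hu : SturmSol κ u u₁ u₂ (Icc a b))
    (hv : SturmSol κ' v v₁ v₂ (Icc a b))
    (hua : u a = 0) (hva : v a = 0) (hu'a : u₁ a = 1) (hv'a : v₁ a = 1)
    (hvpos : ∀ t ∈ Ioc a b, 0 < v t)
    (c : ℝ) (hac : a ≤ c) (hcb : c < b)
    (hP : ∀ s ∈ Icc a c, v s ≤ u s) :
    ∃ d ∈ Ioc c b, ∀ s ∈ Icc a d, v s ≤ u s := by
  obtain ⟨hu0, hu1, hu2c, hu2⟩ := hu
  obtain ⟨hv0, hv1, hv2c, hv2⟩ := hv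
  have haI : a ∈ Icc a b := ⟨le_refl a, hab.le⟩
  -- Step A: find d > c with u positive on (a, d]
  have hA : ∃ d ∈ Ioc c b, ∀ t ∈ Ioc a d, 0 < u t := by
    rcases eq_or_lt_of_le hac with hca | hca
    · -- c = a : use u'(a) = 1 > 0
      have hs : Tendsto (slope u a) (𝓝[Icc a b \ {a}] a) (𝓝 (u₁ a)) :=
        hasDerivWithinAt_iff_tendsto_slope.mp (hu0 a haI)
      have hsub : Ioc a b ⊆ Icc a b \ {a} := fun t ht =>
        ⟨⟨ht.1.le, ht.2⟩, ne_of_gt ht.1⟩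
      have hs' : Tendsto (slope u a) (𝓝[Ioc a b] a) (𝓝 (u₁ a)) :=
        hs.mono_left (nhdsWithin_mono a hsub)
      have hev : ∀ᶠ t in 𝓝[Ioc a b] a, (1:ℝ)/2 < slope u a t := by
        apply hs'.eventually
        rw [hu'a]
        exact eventually_gt_nhds (by norm_num)
      have hev2 : ∀ᶠ t in 𝓝[Ioc a b] a, (1:ℝ)/2 < slope u a t ∧ t ∈ Ioc a b :=
        hev.and self_mem_nhdsWithin
      rw [nhdsWithin_Ioc_eq_nhdsGT hab] at hev2
      obtain ⟨d', hd', hsub'⟩ := mem_nhdsGT_iff_exists_Ioc_subset.mp hev2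
      refine ⟨min d' b, ⟨?_, min_le_right _ _⟩, ?_⟩
      · rw [← hca]; exact lt_min hd' hab
      · intro t ht
        have ht' : t ∈ Ioc a d' := ⟨ht.1, ht.2.trans (min_le_left _ _)⟩
        have := (hsub' ht').1
        have hslope : slope u a t = u t / (t - a) := by
          rw [slope_def_field, hua, sub_zero]
        rw [hslope] at this
        have hta : 0 < t - a := sub_pos.mpr ht.1
        nlinarith [div_mul_cancel₀ (u t) (ne_of_gt hta)]
    · -- a < c : u c ≥ v c > 0, use continuity
      have hcI : c ∈ Icc a b := ⟨hac, hcb.le⟩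
      have hucpos : 0 < u c := lt_of_lt_of_le (hvpos c ⟨hca, hcb.le⟩)
        (hP c ⟨hac, le_refl c⟩)
      have hcont : ContinuousWithinAt u (Icc a b) c := (hu0 c hcI).continuousWithinAt
      have hev : ∀ᶠ t in 𝓝[Icc a b] c, 0 < u t :=
        hcont.eventually_mem (isOpen_Ioi.mem_nhds hucpos)
      obtain ⟨U, hUo, hcU, hUsub⟩ := mem_nhdsWithin.mp hev
      obtain ⟨ε, hε, hball⟩ := Metric.isOpen_iff.mp hUo c hcU
      refine ⟨min (c + ε/2) b, ⟨lt_min (by linarith) hcb, min_le_right _ _⟩, ?_⟩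
      intro t ht
      rcases le_or_gt t c with h | h
      · exact lt_of_lt_of_le (hvpos t ⟨ht.1, h.trans hcb.le⟩) (hP t ⟨ht.1.le, h⟩)
      · apply hUsub
        constructor
        · apply hball
          rw [Metric.mem_ball, Real.dist_eq, abs_of_pos (sub_pos.mpr h)]
          have := ht.2.trans (min_le_left _ _)
          linarith
        · exact ⟨ht.1.le, ht.2.trans (min_le_right _ _)⟩
  obtain ⟨d, hd, hupos⟩ := hA
  have hdb : d ≤ b := hd.2
  have had : a < d := hac.trans_lt hd.1
  have hIccsub : Icc a d ⊆ Icc a b := Icc_subset_Icc_right hdb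
  have hIocsub : Ioc a d ⊆ Icc a b := fun t ht => ⟨ht.1.le, ht.2.trans hdb⟩
  -- Step B: the Wronskian
  set W : ℝ → ℝ := fun t => u₁ t * v t - u t * v₁ t with hWdef
  have hW : ∀ t ∈ Icc a b, HasDerivWithinAt W ((κ' t - κ t) * (u t * v t)) (Icc a b) t := by
    intro t ht
    have h1 := ((hu1 t ht).mul (hv0 t ht)).sub ((hu0 t ht).mul (hv1 t ht))
    have e1 : u₂ t = -(κ t * u t) := by linarith [hu2 t ht]
    have e2 : v₂ t = -(κ' t * v t) := by linarith [hv2 t ht]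
    exact h1.congr_deriv (by rw [e1, e2]; ring)
  -- Step C: W is nonneg on [a, d]
  have hWcont : ContinuousOn W (Icc a d) :=
    fun t ht => ((hW t (hIccsub ht)).continuousWithinAt).mono hIccsub
  have hWmono : MonotoneOn W (Icc a d) := by
    apply monotoneOn_of_hasDerivWithinAt_nonneg (convex_Icc a d) hWcont
      (f' := fun t => (κ' t - κ t) * (u t * v t))
    · intro x hx
      rw [interior_Icc] at hx ⊢
      exact ((hW x (hIccsub (Ioo_subset_Icc_self hx))).mono
        (fun y hy => hIccsub (Ioo_subset_Icc_self hy)))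
    · intro x hx
      rw [interior_Icc] at hx
      have hx' : x ∈ Ioc a d := ⟨hx.1, hx.2.le⟩
      exact mul_nonneg (sub_nonneg.mpr (hle x (hIocsub hx')))
        (mul_pos (hupos x hx') (hvpos x ⟨hx.1, hx.2.le.trans hdb⟩)).le
  have hWa : W a = 0 := by simp [hWdef, hua, hva]
  have hWnonneg : ∀ t ∈ Icc a d, 0 ≤ W t := by
    intro t ht
    have := hWmono ⟨le_refl a, had.le⟩ ht ht.1
    rwa [hWa] at this
  -- Step D: f = u / v is monotone on (a, d]
  set f : ℝ → ℝ := fun t => u t / v t with hfdef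
  have hvne : ∀ t ∈ Ioc a d, v t ≠ 0 := fun t ht => ne_of_gt (hvpos t ⟨ht.1, ht.2.trans hdb⟩)
  have hfcont : ContinuousOn f (Ioc a d) := by
    apply ContinuousOn.div
    · exact fun t ht => ((hu0 t (hIocsub ht)).continuousWithinAt).mono hIocsub
    · exact fun t ht => ((hv0 t (hIocsub ht)).continuousWithinAt).mono hIocsub
    · exact hvne
  have hfmono : MonotoneOn f (Ioc a d) := by
    apply monotoneOn_of_hasDerivWithinAt_nonneg (convex_Ioc a d) hfcont
      (f' := fun t => W t / v t ^ 2)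
    · intro x hx
      rw [interior_Ioc] at hx
      have hx' : x ∈ Ioc a d := ⟨hx.1, hx.2.le⟩
      have hsub : Ioo a d ⊆ Icc a b := fun y hy => hIocsub ⟨hy.1, hy.2.le⟩
      rw [interior_Ioc]
      exact ((hu0 x (hIocsub hx')).mono hsub).div ((hv0 x (hIocsub hx')).mono hsub)
        (hvne x hx')
    · intro x hx
      rw [interior_Ioc] at hx
      exact div_nonneg (hWnonneg x ⟨hx.1.le, hx.2.le⟩) (sq_nonneg _)
  -- Step E: f ≥ 1 on (a, d]
  have hkey : ∀ t ∈ Ioc a d, 1 ≤ f t := by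
    intro t₀ ht₀
    by_contra hcon
    push_neg at hcon
    have hub : ∀ s ∈ Ioc a t₀, u s ≤ f t₀ * v s := by
      intro s hs
      have hs' : s ∈ Ioc a d := ⟨hs.1, hs.2.trans ht₀.2⟩
      have h1 : f s ≤ f t₀ := hfmono hs' ht₀ hs.2
      have h2 : u s = f s * v s := (div_mul_cancel₀ (u s) (hvne s hs')).symm
      rw [h2]
      exact mul_le_mul_of_nonneg_right h1 (hvpos s ⟨hs.1, hs.2.trans (ht₀.2.trans hdb)⟩).le
    have hsub : Ioc a t₀ ⊆ Icc a b \ {a} := fun s hs =>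
      ⟨⟨hs.1.le, hs.2.trans (ht₀.2.trans hdb)⟩, ne_of_gt hs.1⟩
    haveI : (𝓝[Ioc a t₀] a).NeBot := by
      rw [nhdsWithin_Ioc_eq_nhdsGT ht₀.1]; infer_instance
    have hsu : Tendsto (slope u a) (𝓝[Ioc a t₀] a) (𝓝 (u₁ a)) :=
      (hasDerivWithinAt_iff_tendsto_slope.mp (hu0 a haI)).mono_left (nhdsWithin_mono a hsub)
    have hsv : Tendsto (slope v a) (𝓝[Ioc a t₀] a) (𝓝 (v₁ a)) :=
      (hasDerivWithinAt_iff_tendsto_slope.mp (hv0 a haI)).mono_left (nhdsWithin_mono a hsub)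
    have hcomp : ∀ᶠ s in 𝓝[Ioc a t₀] a, slope u a s ≤ f t₀ * slope v a s := by
      filter_upwards [self_mem_nhdsWithin] with s hs
      have hsa : 0 < s - a := sub_pos.mpr hs.1
      rw [slope_def_field, slope_def_field, hua, hva, sub_zero, sub_zero, mul_div_assoc']
      exact div_le_div_of_nonneg_right (hub s hs) hsa.le
    have hfin : u₁ a ≤ f t₀ * v₁ a :=
      le_of_tendsto_of_tendsto hsu (hsv.const_mul (f t₀)) hcomp
    rw [hu'a, hv'a] at hfin
    linarith
  refine ⟨d, hd, ?_⟩
  intro s hs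
  rcases eq_or_lt_of_le hs.1 with h | h
  · rw [← h, hua, hva]
  · have hs' : s ∈ Ioc a d := ⟨h, hs.2⟩
    have := hkey s hs'
    rw [hfdef] at this
    have hv' := hvpos s ⟨h, hs.2.trans hdb⟩
    calc v s = 1 * v s := (one_mul _).symm
    _ ≤ (u s / v s) * v s := mul_le_mul_of_nonneg_right this hv'.le
    _ = u s := div_mul_cancel₀ (u s) (ne_of_gt hv')

/-- J. C. F. Sturm's comparison theorem. -/
theorem sturm_comparison
    (a b : ℝ) (hab : a < b)
    (κ κ' : ℝ → ℝ)
    (hκ : ContinuousOn κ (Icc a b)) (hκ' : ContinuousOn κ' (Icc a b))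
    (hle : ∀ t ∈ Icc a b, κ t ≤ κ' t)
    (u u₁ u₂ v v₁ v₂ : ℝ → ℝ)
    (hu : SturmSol κ u u₁ u₂ (Icc a b))
    (hv : SturmSol κ' v v₁ v₂ (Icc a b))
    (hua : u a = 0) (hva : v a = 0) (hu'a : u₁ a = 1) (hv'a : v₁ a = 1)
    (hvpos : ∀ t ∈ Ioc a b, 0 < v t) :
    ∀ t ∈ Icc a b, v t ≤ u t := by
  set T : Set ℝ := {t | t ∈ Icc a b ∧ ∀ s ∈ Icc a t, v s ≤ u s} with hTdef
  have haT : a ∈ T := by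
    refine ⟨⟨le_refl a, hab.le⟩, fun s hs => ?_⟩
    have : s = a := le_antisymm hs.2 hs.1
    rw [this, hua, hva]
  have hbdd : BddAbove T := ⟨b, fun t ht => ht.1.2⟩
  set c := sSup T with hcdef
  have hac : a ≤ c := le_csSup hbdd haT
  have hcb : c ≤ b := csSup_le ⟨a, haT⟩ (fun t ht => ht.1.2)
  have hPc' : ∀ s ∈ Ico a c, v s ≤ u s := by
    intro s hs
    obtain ⟨t, htT, hst⟩ := exists_lt_of_lt_csSup ⟨a, haT⟩ hs.2
    exact htT.2 s ⟨hs.1, hst.le⟩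
  have hvc : v c ≤ u c := by
    rcases eq_or_lt_of_le hac with h' | h'
    · rw [← h', hua, hva]
    · haveI : (𝓝[Ico a c] c).NeBot := by
        rw [nhdsWithin_Ico_eq_nhdsLT h']; infer_instance
      have hsI : c ∈ Icc a b := ⟨hac, hcb⟩
      have hgc : ContinuousWithinAt (fun x => u x - v x) (Icc a b) c :=
        ((hu.1 c hsI).continuousWithinAt).sub ((hv.1 c hsI).continuousWithinAt)
      have hsub : Ico a c ⊆ Icc a b := fun y hy => ⟨hy.1, hy.2.le.trans hcb⟩
      have htend : Tendsto (fun x => u x - v x) (𝓝[Ico a c] c) (𝓝 (u c - v c)) :=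
        hgc.tendsto.mono_left (nhdsWithin_mono c hsub)
      have hev : ∀ᶠ x in 𝓝[Ico a c] c, 0 ≤ u x - v x := by
        filter_upwards [self_mem_nhdsWithin] with x hx
        exact sub_nonneg.mpr (hPc' x hx)
      linarith [ge_of_tendsto htend hev]
  have hPc : ∀ s ∈ Icc a c, v s ≤ u s := by
    intro s hs
    rcases lt_or_eq_of_le hs.2 with h | h
    · exact hPc' s ⟨hs.1, h⟩
    · rw [h]; exact hvc
  have hceqb : c = b := by
    by_contra hne
    have hclt : c < b := lt_of_le_of_ne hcb hne
    obtain ⟨d, hd, hPd⟩ := sturm_extend a b hab κ κ' hle u u₁ u₂ v v₁ v₂ hu hv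
      hua hva hu'a hv'a hvpos c hac hclt hPc
    have hdT : d ∈ T := ⟨⟨hac.trans hd.1.le, hd.2⟩, hPd⟩
    exact absurd (le_csSup hbdd hdT) (not_le.mpr hd.1)
  intro t ht
  exact hPc t (hceqb ▸ ht)
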